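/- The infinite series Σ_{i=1}^{∞} 1/(i(2i−1)(2i+1)) converges and equals 2·ln 2 − 1 (equivalently ln 4 − 1). -/
import Mathlib

open Filter Real Finset Topology

private lemma partial_sum_eq (N : ℕ) :
    ∑ n ∈ Finset.range N,
      (1 : ℝ) / (((n:ℝ)+1) * (2*((n:ℝ)+1) - 1) * (2*((n:ℝ)+1) + 1))
      = 2 * (harmonic (2*N) : ℝ) - 2 * (harmonic N : ℝ) + 1/(2*(N:ℝ)+1) - 1 := by
  induction N with
  | zero => simp
  | succ N ih =>
    rw [Finset.sum_range_succ, ih]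
    have h2 : 2*(N+1) = 2*N+1+1 := by omega
    rw [h2, harmonic_succ, harmonic_succ, harmonic_succ]
    push_cast
    have h1 : (2*(N:ℝ)+1) ≠ 0 := by positivity
    have h3 : (2*(N:ℝ)+2) ≠ 0 := by positivity
    have h4 : ((N:ℝ)+1) ≠ 0 := by positivity
    have h5 : (2*((N:ℝ)+1)+1) ≠ 0 := by positivity
    have hr : (2*((N:ℝ)+1)-1) = 2*(N:ℝ)+1 := by ring
    rw [hr]
    field_simp
    ring

private lemma tendsto_two_mul : Tendsto (fun n : ℕ => 2*n) atTop atTop :=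
  tendsto_atTop_mono (fun n => by simp only [id_eq]; omega) tendsto_id

/-- Σ_{i=1}^{∞} 1/(i(2i−1)(2i+1)) converges and equals 2·ln 2 − 1
(indexing i = n+1 for n : ℕ). -/
theorem sum_inv_i_mul_odd_eq_log_four_sub_one :
    (Summable fun n : ℕ =>
      (1 : ℝ) / (((n:ℝ)+1) * (2*((n:ℝ)+1) - 1) * (2*((n:ℝ)+1) + 1))) ∧
    (∑' n : ℕ, (1 : ℝ) / (((n:ℝ)+1) * (2*((n:ℝ)+1) - 1) * (2*((n:ℝ)+1) + 1)))
      = 2 * Real.log 2 - 1 := by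
  have hsum : Summable fun n : ℕ =>
      (1 : ℝ) / (((n:ℝ)+1) * (2*((n:ℝ)+1) - 1) * (2*((n:ℝ)+1) + 1)) := by
    have hbase : Summable (fun n : ℕ => 1/((n:ℝ)^2)) :=
      Real.summable_one_div_nat_pow.mpr one_lt_two
    have hshift : Summable (fun n : ℕ => 1/(((n:ℝ)+1)^2)) := by
      have := (summable_nat_add_iff 1).mpr hbase
      refine this.congr fun n => ?_
      push_cast
      ring
    refine Summable.of_nonneg_of_le (fun n => ?_) (fun n => ?_) hshift
    · have hr : ((n:ℝ)+1) * (2*((n:ℝ)+1) - 1) * (2*((n:ℝ)+1) + 1)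
          = ((n:ℝ)+1)*(2*(n:ℝ)+1)*(2*(n:ℝ)+3) := by ring
      rw [hr]
      positivity
    have hn : (0:ℝ) ≤ n := Nat.cast_nonneg n
    exact one_div_le_one_div_of_le (by nlinarith) (by nlinarith)
  refine ⟨hsum, ?_⟩
  have h1 : Tendsto (fun N : ℕ => (harmonic (2*N) : ℝ) - Real.log (2*N)) atTop
      (𝓝 Real.eulerMascheroniConstant) := by
    refine (Real.tendsto_harmonic_sub_log.comp tendsto_two_mul).congr fun N => ?_
    simp only [Function.comp_apply]
    push_cast
    ring
  have h2 := Real.tendsto_harmonic_sub_log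
  have h3 : Tendsto (fun N : ℕ => 1/(2*(N:ℝ)+1)) atTop (𝓝 0) := by
    simp only [one_div]
    apply Tendsto.comp tendsto_inv_atTop_zero
    apply tendsto_atTop_add_const_right
    exact (tendsto_natCast_atTop_atTop (R := ℝ)).const_mul_atTop two_pos
  have key : Tendsto (fun N : ℕ =>
      2 * ((harmonic (2*N) : ℝ) - Real.log (2*N)) - 2 * ((harmonic N : ℝ) - Real.log N)
        + 1/(2*(N:ℝ)+1) - 1 + 2 * Real.log 2) atTop
      (𝓝 (2 * Real.eulerMascheroniConstant - 2 * Real.eulerMascheroniConstant + 0 - 1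
        + 2 * Real.log 2)) := by
    exact ((((h1.const_mul 2).sub (h2.const_mul 2)).add h3).sub_const 1).add_const _
  have key2 : Tendsto (fun N : ℕ =>
      2 * (harmonic (2*N) : ℝ) - 2 * (harmonic N : ℝ) + 1/(2*(N:ℝ)+1) - 1) atTop
      (𝓝 (2 * Real.log 2 - 1)) := by
    have heq : (fun N : ℕ =>
        2 * ((harmonic (2*N) : ℝ) - Real.log (2*N)) - 2 * ((harmonic N : ℝ) - Real.log N)
          + 1/(2*(N:ℝ)+1) - 1 + 2 * Real.log 2) =ᶠ[atTop]
        (fun N : ℕ => 2 * (harmonic (2*N) : ℝ) - 2 * (harmonic N : ℝ)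
          + 1/(2*(N:ℝ)+1) - 1) := by
      filter_upwards [eventually_ge_atTop 1] with N hN
      have hN0 : (N:ℝ) ≠ 0 := by
        simp only [ne_eq, Nat.cast_eq_zero]; omega
      have hlog : Real.log (2*(N:ℝ)) = Real.log 2 + Real.log N :=
        Real.log_mul two_ne_zero hN0
      rw [hlog]
      ring
    have := key.congr' heq
    convert this using 2
    ring
  have htend : Tendsto (fun N : ℕ => ∑ n ∈ Finset.range N,
      (1 : ℝ) / (((n:ℝ)+1) * (2*((n:ℝ)+1) - 1) * (2*((n:ℝ)+1) + 1))) atTop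
      (𝓝 (2 * Real.log 2 - 1)) := by
    refine key2.congr fun N => (partial_sum_eq N).symm
  exact ((hsum.hasSum_iff_tendsto_nat).mpr htend).tsum_eq
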